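/- (Null distributions of exogeneity statistics.) Under the rank condition, suppose y = Yβ + X₁γ + σ·ε for some β ∈ ℝ^G, γ ∈ ℝ^{k₁}, real σ ≠ 0, and ε ∈ ℝ^T. Then C₁y = σ·C₁ε, yᵀΨ₀y = σ²·εᵀΨ₀ε, yᵀΛ_ly = σ²·εᵀΛ_lε for l = 1, 2, 3, 4, yᵀΨ_Ry = σ²·εᵀΨ_Rε, and yᵀΛ_Ry = σ²·εᵀΛ_Rε. Consequently, whenever the relevant denominator is nonzero, κ_l·(yᵀΨ₀y)/(yᵀΛ_ly) = κ_l·(εᵀΨ₀ε)/(εᵀΛ_lε) for l = 1, 2, 3, 4, κ_R·(yᵀΨ_Ry)/(yᵀΛ_Ry) = κ_R·(εᵀΨ_Rε)/(εᵀΛ_Rε), and T·(C₁y)ᵀ[(yᵀΛ₃y)Ω̂_IV⁻¹ − (yᵀΛ₄y)Ω̂_LS⁻¹]⁻¹(C₁y) = T·(C₁ε)ᵀ[(εᵀΛ₃ε)Ω̂_IV⁻¹ − (εᵀΛ₄ε)Ω̂_LS⁻¹]⁻¹(C₁ε): all the exogeneity statistics computed from y coincide with the same expressions evaluated at ε, and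 thus do not depend on β, γ, or σ. -/

import Mathlib

open Matrix

variable {T G k₁ k₂ : ℕ}

/-- Orthogonal projection `P̄[A] = A(AᵀA)⁻¹Aᵀ` onto the column space of `A`. -/
noncomputable def projM {n : Type*} [Fintype n] [DecidableEq n]
    (A : Matrix (Fin T) n ℝ) : Matrix (Fin T) (Fin T) ℝ :=
  A * (Aᵀ * A)⁻¹ * Aᵀ

/-- The annihilator `M̄[A] = I - P̄[A]`. -/
noncomputable def annM {n : Type*} [Fintype n] [DecidableEq n]
    (A : Matrix (Fin T) n ℝ) : Matrix (Fin T) (Fin T) ℝ :=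
  1 - projM A

noncomputable def M1 (X₁ : Matrix (Fin T) (Fin k₁) ℝ) : Matrix (Fin T) (Fin T) ℝ :=
  annM X₁

noncomputable def Pm (X₁ : Matrix (Fin T) (Fin k₁) ℝ) (X₂ : Matrix (Fin T) (Fin k₂) ℝ) :
    Matrix (Fin T) (Fin T) ℝ :=
  projM (fromCols X₁ X₂)

noncomputable def Mm (X₁ : Matrix (Fin T) (Fin k₁) ℝ) (X₂ : Matrix (Fin T) (Fin k₂) ℝ) :
    Matrix (Fin T) (Fin T) ℝ :=
  annM (fromCols X₁ X₂)

noncomputable def N1 (X₁ : Matrix (Fin T) (Fin k₁) ℝ) (X₂ : Matrix (Fin T) (Fin k₂) ℝ) :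
    Matrix (Fin T) (Fin T) ℝ :=
  M1 X₁ * Pm X₁ X₂

noncomputable def B1 (Y : Matrix (Fin T) (Fin G) ℝ) (X₁ : Matrix (Fin T) (Fin k₁) ℝ) :
    Matrix (Fin G) (Fin T) ℝ :=
  (Yᵀ * M1 X₁ * Y)⁻¹ * (Yᵀ * M1 X₁)

noncomputable def B2 (Y : Matrix (Fin T) (Fin G) ℝ) (X₁ : Matrix (Fin T) (Fin k₁) ℝ)
    (X₂ : Matrix (Fin T) (Fin k₂) ℝ) : Matrix (Fin G) (Fin T) ℝ :=
  (Yᵀ * N1 X₁ X₂ * Y)⁻¹ * (Yᵀ * N1 X₁ X₂)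

noncomputable def C1 (Y : Matrix (Fin T) (Fin G) ℝ) (X₁ : Matrix (Fin T) (Fin k₁) ℝ)
    (X₂ : Matrix (Fin T) (Fin k₂) ℝ) : Matrix (Fin G) (Fin T) ℝ :=
  B2 Y X₁ X₂ - B1 Y X₁

/-- OLS estimator `β̂`. -/
noncomputable def betaOLS (y : Fin T → ℝ) (Y : Matrix (Fin T) (Fin G) ℝ)
    (X₁ : Matrix (Fin T) (Fin k₁) ℝ) : Fin G → ℝ :=
  B1 Y X₁ *ᵥ y

/-- 2SLS estimator `β̃`. -/
noncomputable def beta2S (y : Fin T → ℝ) (Y : Matrix (Fin T) (Fin G) ℝ)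
    (X₁ : Matrix (Fin T) (Fin k₁) ℝ) (X₂ : Matrix (Fin T) (Fin k₂) ℝ) : Fin G → ℝ :=
  B2 Y X₁ X₂ *ᵥ y

noncomputable def OmIV (Y : Matrix (Fin T) (Fin G) ℝ) (X₁ : Matrix (Fin T) (Fin k₁) ℝ)
    (X₂ : Matrix (Fin T) (Fin k₂) ℝ) : Matrix (Fin G) (Fin G) ℝ :=
  (T : ℝ)⁻¹ • (Yᵀ * N1 X₁ X₂ * Y)

noncomputable def OmLS (Y : Matrix (Fin T) (Fin G) ℝ) (X₁ : Matrix (Fin T) (Fin k₁) ℝ) :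
    Matrix (Fin G) (Fin G) ℝ :=
  (T : ℝ)⁻¹ • (Yᵀ * M1 X₁ * Y)

noncomputable def SigV (Y : Matrix (Fin T) (Fin G) ℝ) (X₁ : Matrix (Fin T) (Fin k₁) ℝ)
    (X₂ : Matrix (Fin T) (Fin k₂) ℝ) : Matrix (Fin G) (Fin G) ℝ :=
  (T : ℝ)⁻¹ • (Yᵀ * Mm X₁ X₂ * Y)

noncomputable def Dhat (Y : Matrix (Fin T) (Fin G) ℝ) (X₁ : Matrix (Fin T) (Fin k₁) ℝ)
    (X₂ : Matrix (Fin T) (Fin k₂) ℝ) : Matrix (Fin G) (Fin G) ℝ :=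
  (OmIV Y X₁ X₂)⁻¹ - (OmLS Y X₁)⁻¹

noncomputable def Psi0 (Y : Matrix (Fin T) (Fin G) ℝ) (X₁ : Matrix (Fin T) (Fin k₁) ℝ)
    (X₂ : Matrix (Fin T) (Fin k₂) ℝ) : Matrix (Fin T) (Fin T) ℝ :=
  (C1 Y X₁ X₂)ᵀ * (Dhat Y X₁ X₂)⁻¹ * C1 Y X₁ X₂

noncomputable def N2 (Y : Matrix (Fin T) (Fin G) ℝ) (X₁ : Matrix (Fin T) (Fin k₁) ℝ)
    (X₂ : Matrix (Fin T) (Fin k₂) ℝ) : Matrix (Fin T) (Fin T) ℝ :=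
  1 - M1 X₁ * Y * B2 Y X₁ X₂

noncomputable def Lam1 (Y : Matrix (Fin T) (Fin G) ℝ) (X₁ : Matrix (Fin T) (Fin k₁) ℝ)
    (X₂ : Matrix (Fin T) (Fin k₂) ℝ) : Matrix (Fin T) (Fin T) ℝ :=
  (T : ℝ)⁻¹ • (N1 X₁ X₂ * annM (N1 X₁ X₂ * Y) * N1 X₁ X₂)

noncomputable def Lam2 (Y : Matrix (Fin T) (Fin G) ℝ) (X₁ : Matrix (Fin T) (Fin k₁) ℝ)
    (X₂ : Matrix (Fin T) (Fin k₂) ℝ) : Matrix (Fin T) (Fin T) ℝ :=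
  M1 X₁ * ((T : ℝ)⁻¹ • annM (M1 X₁ * Y) - Psi0 Y X₁ X₂) * M1 X₁

noncomputable def Lam3 (Y : Matrix (Fin T) (Fin G) ℝ) (X₁ : Matrix (Fin T) (Fin k₁) ℝ)
    (X₂ : Matrix (Fin T) (Fin k₂) ℝ) : Matrix (Fin T) (Fin T) ℝ :=
  (T : ℝ)⁻¹ • (M1 X₁ * (N2 Y X₁ X₂)ᵀ * N2 Y X₁ X₂ * M1 X₁)

noncomputable def Lam4 (Y : Matrix (Fin T) (Fin G) ℝ) (X₁ : Matrix (Fin T) (Fin k₁) ℝ) :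
    Matrix (Fin T) (Fin T) ℝ :=
  (T : ℝ)⁻¹ • (M1 X₁ * annM (M1 X₁ * Y) * M1 X₁)

def Ybar (Y : Matrix (Fin T) (Fin G) ℝ) (X₁ : Matrix (Fin T) (Fin k₁) ℝ) :
    Matrix (Fin T) (Fin G ⊕ Fin k₁) ℝ :=
  fromCols Y X₁

def Zfull (Y : Matrix (Fin T) (Fin G) ℝ) (X₁ : Matrix (Fin T) (Fin k₁) ℝ)
    (X₂ : Matrix (Fin T) (Fin k₂) ℝ) : Matrix (Fin T) (Fin G ⊕ (Fin k₁ ⊕ Fin k₂)) ℝ :=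
  fromCols Y (fromCols X₁ X₂)

noncomputable def PsiR (Y : Matrix (Fin T) (Fin G) ℝ) (X₁ : Matrix (Fin T) (Fin k₁) ℝ)
    (X₂ : Matrix (Fin T) (Fin k₂) ℝ) : Matrix (Fin T) (Fin T) ℝ :=
  (T : ℝ)⁻¹ • (annM (Ybar Y X₁) - annM (Zfull Y X₁ X₂))

noncomputable def LamR (Y : Matrix (Fin T) (Fin G) ℝ) (X₁ : Matrix (Fin T) (Fin k₁) ℝ)
    (X₂ : Matrix (Fin T) (Fin k₂) ℝ) : Matrix (Fin T) (Fin T) ℝ :=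
  (T : ℝ)⁻¹ • annM (Zfull Y X₁ X₂)

/-- `σ̂² = (1/T)(y−Yβ̂)ᵀM₁(y−Yβ̂)`. -/
noncomputable def sigHat2 (y : Fin T → ℝ) (Y : Matrix (Fin T) (Fin G) ℝ)
    (X₁ : Matrix (Fin T) (Fin k₁) ℝ) : ℝ :=
  (T : ℝ)⁻¹ * ((y - Y *ᵥ betaOLS y Y X₁) ⬝ᵥ (M1 X₁ *ᵥ (y - Y *ᵥ betaOLS y Y X₁)))

/-- `σ̃² = (1/T)(y−Yβ̃)ᵀM₁(y−Yβ̃)`. -/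
noncomputable def sigTil2 (y : Fin T → ℝ) (Y : Matrix (Fin T) (Fin G) ℝ)
    (X₁ : Matrix (Fin T) (Fin k₁) ℝ) (X₂ : Matrix (Fin T) (Fin k₂) ℝ) : ℝ :=
  (T : ℝ)⁻¹ * ((y - Y *ᵥ beta2S y Y X₁ X₂) ⬝ᵥ (M1 X₁ *ᵥ (y - Y *ᵥ beta2S y Y X₁ X₂)))

/-- `σ̃₁² = (1/T)(y−Yβ̃)ᵀN₁(y−Yβ̃)`. -/
noncomputable def sigTil1sq (y : Fin T → ℝ) (Y : Matrix (Fin T) (Fin G) ℝ)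
    (X₁ : Matrix (Fin T) (Fin k₁) ℝ) (X₂ : Matrix (Fin T) (Fin k₂) ℝ) : ℝ :=
  (T : ℝ)⁻¹ * ((y - Y *ᵥ beta2S y Y X₁ X₂) ⬝ᵥ (N1 X₁ X₂ *ᵥ (y - Y *ᵥ beta2S y Y X₁ X₂)))

/-- `σ̃₂² = σ̂² − (β̃−β̂)ᵀΔ̂⁻¹(β̃−β̂)`. -/
noncomputable def sigTil2sq (y : Fin T → ℝ) (Y : Matrix (Fin T) (Fin G) ℝ)
    (X₁ : Matrix (Fin T) (Fin k₁) ℝ) (X₂ : Matrix (Fin T) (Fin k₂) ℝ) : ℝ :=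
  sigHat2 y Y X₁ -
    (beta2S y Y X₁ X₂ - betaOLS y Y X₁) ⬝ᵥ
      ((Dhat Y X₁ X₂)⁻¹ *ᵥ (beta2S y Y X₁ X₂ - betaOLS y Y X₁))

/-- The rank condition: `X₁`, `X = [X₁, X₂]`, `[Y, X]` and `[P̄[X]Y, X₁]` all have
full column rank. -/
def RankCond (Y : Matrix (Fin T) (Fin G) ℝ) (X₁ : Matrix (Fin T) (Fin k₁) ℝ)
    (X₂ : Matrix (Fin T) (Fin k₂) ℝ) : Prop :=
  X₁.rank = k₁ ∧ (fromCols X₁ X₂).rank = k₁ + k₂ ∧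
    (fromCols Y (fromCols X₁ X₂)).rank = G + (k₁ + k₂) ∧
    (fromCols (Pm X₁ X₂ * Y) X₁).rank = G + k₁


section Aux

variable {m n : Type*} [Fintype m] [Fintype n] [DecidableEq n]

lemma mulVec_inj_of_ker (A : Matrix m n ℝ) (h : ∀ u, A *ᵥ u = 0 → u = 0) :
    Function.Injective A.mulVec := by
  intro v w hvw
  have := h (v - w) (by rw [Matrix.mulVec_sub, hvw, sub_self])
  exact sub_eq_zero.mp this

lemma ker_of_mulVec_inj (A : Matrix m n ℝ) (h : Function.Injective A.mulVec)
    {u : n → ℝ} (hu : A *ᵥ u = 0) : u = 0 :=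
  h (by simpa [Matrix.mulVec_zero] using hu)

lemma inj_of_rank_eq_card (A : Matrix m n ℝ) (h : A.rank = Fintype.card n) :
    Function.Injective A.mulVec := by
  have hker : LinearMap.ker A.mulVecLin = ⊥ := by
    have h1 := LinearMap.finrank_range_add_finrank_ker A.mulVecLin
    rw [Module.finrank_fintype_fun_eq_card] at h1
    rw [Matrix.rank] at h
    have h2 : Module.finrank ℝ (LinearMap.ker A.mulVecLin) = 0 := by omega
    exact Submodule.finrank_eq_zero.mp h2
  intro v w hvw
  have : A.mulVecLin v = A.mulVecLin w := by simpa [Matrix.mulVecLin_apply] using hvw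
  exact LinearMap.ker_eq_bot.mp hker this

lemma isUnit_gram (A : Matrix m n ℝ) (h : Function.Injective A.mulVec) :
    IsUnit (Aᵀ * A) := by
  rw [← Matrix.mulVec_injective_iff_isUnit]
  apply mulVec_inj_of_ker
  intro u hu
  have h0 : A *ᵥ u = 0 := by
    have hd : (A *ᵥ u) ⬝ᵥ (A *ᵥ u) = 0 := by
      have : u ⬝ᵥ ((Aᵀ * A) *ᵥ u) = 0 := by rw [hu, dotProduct_zero]
      rwa [← Matrix.mulVec_mulVec, Matrix.dotProduct_mulVec, ← Matrix.mulVec_transpose,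
        transpose_transpose] at this
    exact dotProduct_self_eq_zero.mp hd
  exact ker_of_mulVec_inj A h h0

lemma isUnit_gram_det (A : Matrix m n ℝ) (h : Function.Injective A.mulVec) :
    IsUnit (Aᵀ * A).det :=
  (Matrix.isUnit_iff_isUnit_det _).mp (isUnit_gram A h)

lemma real_smul_inv (c : ℝ) (hc : c ≠ 0) (M : Matrix n n ℝ) :
    (c • M)⁻¹ = c⁻¹ • M⁻¹ := by
  by_cases h : IsUnit M.det
  · refine Matrix.inv_eq_left_inv ?_
    rw [Matrix.smul_mul, Matrix.mul_smul, Matrix.nonsing_inv_mul M h, smul_smul,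
      inv_mul_cancel₀ hc, one_smul]
  · have h2 : ¬ IsUnit (c • M).det := by
      rw [Matrix.det_smul, isUnit_iff_ne_zero, not_ne_iff]
      have h3 : M.det = 0 := by
        by_contra h3; exact h (isUnit_iff_ne_zero.mpr h3)
      rw [h3, mul_zero]
    rw [Matrix.nonsing_inv_apply_not_isUnit _ h2, Matrix.nonsing_inv_apply_not_isUnit _ h,
      smul_zero]

end Aux

section ProjLemmas

variable {T : ℕ} {n : Type*} [Fintype n] [DecidableEq n]

lemma projM_transpose (A : Matrix (Fin T) n ℝ) : (projM A)ᵀ = projM A := by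
  simp only [projM, transpose_mul, transpose_transpose, Matrix.transpose_nonsing_inv,
    Matrix.mul_assoc]

lemma annM_transpose (A : Matrix (Fin T) n ℝ) : (annM A)ᵀ = annM A := by
  rw [annM, transpose_sub, transpose_one, projM_transpose]

lemma projM_mul_self_right (A : Matrix (Fin T) n ℝ) (h : IsUnit (Aᵀ * A).det) :
    projM A * A = A := by
  rw [projM, Matrix.mul_assoc, Matrix.mul_assoc, Matrix.nonsing_inv_mul _ h, Matrix.mul_one]

lemma annM_mul_self (A : Matrix (Fin T) n ℝ) (h : IsUnit (Aᵀ * A).det) :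
    annM A * A = 0 := by
  rw [annM, Matrix.sub_mul, Matrix.one_mul, projM_mul_self_right A h, sub_self]

lemma projM_idem (A : Matrix (Fin T) n ℝ) (h : IsUnit (Aᵀ * A).det) :
    projM A * projM A = projM A := by
  have key : Aᵀ * (A * ((Aᵀ * A)⁻¹ * Aᵀ)) = Aᵀ := by
    rw [← Matrix.mul_assoc Aᵀ A, ← Matrix.mul_assoc, Matrix.mul_nonsing_inv _ h,
      Matrix.one_mul]
  simp only [projM, Matrix.mul_assoc, key]

end ProjLemmas

/-- **Null distributions of exogeneity statistics.**  Under the rank condition, if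
`y = Yβ + X₁γ + σε` with `σ ≠ 0`, then `C₁y = σC₁ε`, `yᵀΨ₀y = σ²εᵀΨ₀ε`,
`yᵀΛ_ly = σ²εᵀΛ_lε` (`l = 1,2,3,4`), `yᵀΨ_Ry = σ²εᵀΨ_Rε`, `yᵀΛ_Ry = σ²εᵀΛ_Rε`;
consequently all DWH and RH exogeneity statistics computed from `y` coincide with the
same expressions evaluated at `ε`, and hence do not depend on `β`, `γ`, or `σ`. -/
theorem stmt15 {T G k₁ k₂ : ℕ}
    (hT : 0 < T) (hG : 0 < G) (hk₁ : 0 < k₁) (hk₂ : 0 < k₂)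
    (y : Fin T → ℝ) (Y : Matrix (Fin T) (Fin G) ℝ)
    (X₁ : Matrix (Fin T) (Fin k₁) ℝ) (X₂ : Matrix (Fin T) (Fin k₂) ℝ)
    (hrank : RankCond Y X₁ X₂)
    (β : Fin G → ℝ) (γ : Fin k₁ → ℝ) (σ : ℝ) (hσ : σ ≠ 0) (ε : Fin T → ℝ)
    (hy : y = Y *ᵥ β + X₁ *ᵥ γ + σ • ε) :
    C1 Y X₁ X₂ *ᵥ y = σ • (C1 Y X₁ X₂ *ᵥ ε) ∧
    y ⬝ᵥ (Psi0 Y X₁ X₂ *ᵥ y) = σ ^ 2 * (ε ⬝ᵥ (Psi0 Y X₁ X₂ *ᵥ ε)) ∧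
    y ⬝ᵥ (Lam1 Y X₁ X₂ *ᵥ y) = σ ^ 2 * (ε ⬝ᵥ (Lam1 Y X₁ X₂ *ᵥ ε)) ∧
    y ⬝ᵥ (Lam2 Y X₁ X₂ *ᵥ y) = σ ^ 2 * (ε ⬝ᵥ (Lam2 Y X₁ X₂ *ᵥ ε)) ∧
    y ⬝ᵥ (Lam3 Y X₁ X₂ *ᵥ y) = σ ^ 2 * (ε ⬝ᵥ (Lam3 Y X₁ X₂ *ᵥ ε)) ∧
    y ⬝ᵥ (Lam4 Y X₁ *ᵥ y) = σ ^ 2 * (ε ⬝ᵥ (Lam4 Y X₁ *ᵥ ε)) ∧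
    y ⬝ᵥ (PsiR Y X₁ X₂ *ᵥ y) = σ ^ 2 * (ε ⬝ᵥ (PsiR Y X₁ X₂ *ᵥ ε)) ∧
    y ⬝ᵥ (LamR Y X₁ X₂ *ᵥ y) = σ ^ 2 * (ε ⬝ᵥ (LamR Y X₁ X₂ *ᵥ ε)) ∧
    (y ⬝ᵥ (Lam1 Y X₁ X₂ *ᵥ y) ≠ 0 →
      ((k₂ : ℝ) - (G : ℝ)) / (G : ℝ) *
          (y ⬝ᵥ (Psi0 Y X₁ X₂ *ᵥ y) / (y ⬝ᵥ (Lam1 Y X₁ X₂ *ᵥ y)))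
        = ((k₂ : ℝ) - (G : ℝ)) / (G : ℝ) *
            (ε ⬝ᵥ (Psi0 Y X₁ X₂ *ᵥ ε) / (ε ⬝ᵥ (Lam1 Y X₁ X₂ *ᵥ ε)))) ∧
    (y ⬝ᵥ (Lam2 Y X₁ X₂ *ᵥ y) ≠ 0 →
      ((T : ℝ) - (k₁ : ℝ) - 2 * (G : ℝ)) / (G : ℝ) *
          (y ⬝ᵥ (Psi0 Y X₁ X₂ *ᵥ y) / (y ⬝ᵥ (Lam2 Y X₁ X₂ *ᵥ y)))
        = ((T : ℝ) - (k₁ : ℝ) - 2 * (G : ℝ)) / (G : ℝ) *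
            (ε ⬝ᵥ (Psi0 Y X₁ X₂ *ᵥ ε) / (ε ⬝ᵥ (Lam2 Y X₁ X₂ *ᵥ ε)))) ∧
    (y ⬝ᵥ (Lam3 Y X₁ X₂ *ᵥ y) ≠ 0 →
      ((T : ℝ) - (k₁ : ℝ) - (G : ℝ)) *
          (y ⬝ᵥ (Psi0 Y X₁ X₂ *ᵥ y) / (y ⬝ᵥ (Lam3 Y X₁ X₂ *ᵥ y)))
        = ((T : ℝ) - (k₁ : ℝ) - (G : ℝ)) *
            (ε ⬝ᵥ (Psi0 Y X₁ X₂ *ᵥ ε) / (ε ⬝ᵥ (Lam3 Y X₁ X₂ *ᵥ ε)))) ∧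
    (y ⬝ᵥ (Lam4 Y X₁ *ᵥ y) ≠ 0 →
      ((T : ℝ) - (k₁ : ℝ) - (G : ℝ)) *
          (y ⬝ᵥ (Psi0 Y X₁ X₂ *ᵥ y) / (y ⬝ᵥ (Lam4 Y X₁ *ᵥ y)))
        = ((T : ℝ) - (k₁ : ℝ) - (G : ℝ)) *
            (ε ⬝ᵥ (Psi0 Y X₁ X₂ *ᵥ ε) / (ε ⬝ᵥ (Lam4 Y X₁ *ᵥ ε)))) ∧
    (y ⬝ᵥ (LamR Y X₁ X₂ *ᵥ y) ≠ 0 →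
      ((T : ℝ) - (k₁ : ℝ) - (k₂ : ℝ) - (G : ℝ)) / (k₂ : ℝ) *
          (y ⬝ᵥ (PsiR Y X₁ X₂ *ᵥ y) / (y ⬝ᵥ (LamR Y X₁ X₂ *ᵥ y)))
        = ((T : ℝ) - (k₁ : ℝ) - (k₂ : ℝ) - (G : ℝ)) / (k₂ : ℝ) *
            (ε ⬝ᵥ (PsiR Y X₁ X₂ *ᵥ ε) / (ε ⬝ᵥ (LamR Y X₁ X₂ *ᵥ ε)))) ∧
    (T : ℝ) *
        ((C1 Y X₁ X₂ *ᵥ y) ⬝ᵥ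
          (((y ⬝ᵥ (Lam3 Y X₁ X₂ *ᵥ y)) • (OmIV Y X₁ X₂)⁻¹ -
              (y ⬝ᵥ (Lam4 Y X₁ *ᵥ y)) • (OmLS Y X₁)⁻¹)⁻¹ *ᵥ
            (C1 Y X₁ X₂ *ᵥ y)))
      = (T : ℝ) *
          ((C1 Y X₁ X₂ *ᵥ ε) ⬝ᵥ
            (((ε ⬝ᵥ (Lam3 Y X₁ X₂ *ᵥ ε)) • (OmIV Y X₁ X₂)⁻¹ -
                (ε ⬝ᵥ (Lam4 Y X₁ *ᵥ ε)) • (OmLS Y X₁)⁻¹)⁻¹ *ᵥ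
              (C1 Y X₁ X₂ *ᵥ ε))) := by
  obtain ⟨hr1, hr2, hr3, hr4⟩ := hrank
  -- injectivity and invertibility facts
  have hX1inj : Function.Injective X₁.mulVec :=
    inj_of_rank_eq_card _ (by simpa using hr1)
  have hU1 : IsUnit (X₁ᵀ * X₁).det := isUnit_gram_det _ hX1inj
  have hXinj : Function.Injective (fromCols X₁ X₂).mulVec :=
    inj_of_rank_eq_card _ (by simpa using hr2)
  have hUX : IsUnit ((fromCols X₁ X₂)ᵀ * fromCols X₁ X₂).det := isUnit_gram_det _ hXinj
  have hZinj : Function.Injective (Zfull Y X₁ X₂).mulVec :=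
    inj_of_rank_eq_card _ (by simpa [Zfull] using hr3)
  have hUZ : IsUnit ((Zfull Y X₁ X₂)ᵀ * Zfull Y X₁ X₂).det := isUnit_gram_det _ hZinj
  have hQinj : Function.Injective (fromCols (Pm X₁ X₂ * Y) X₁).mulVec :=
    inj_of_rank_eq_card _ (by simpa using hr4)
  -- projection identities
  have hP1X1 : projM X₁ * X₁ = X₁ := projM_mul_self_right X₁ hU1
  have hM1X1 : M1 X₁ * X₁ = 0 := annM_mul_self X₁ hU1
  have hPX : Pm X₁ X₂ * fromCols X₁ X₂ = fromCols X₁ X₂ := projM_mul_self_right _ hUX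
  have hcolX1 : fromCols X₁ X₂ * fromRows (1 : Matrix (Fin k₁) (Fin k₁) ℝ)
      (0 : Matrix (Fin k₂) (Fin k₁) ℝ) = X₁ := by
    rw [fromCols_mul_fromRows, Matrix.mul_one, Matrix.mul_zero, add_zero]
  have hPX1 : Pm X₁ X₂ * X₁ = X₁ := by
    have h2 : Pm X₁ X₂ * (fromCols X₁ X₂ * fromRows (1 : Matrix (Fin k₁) (Fin k₁) ℝ)
        (0 : Matrix (Fin k₂) (Fin k₁) ℝ)) = fromCols X₁ X₂ * fromRows 1 0 := by
      rw [← Matrix.mul_assoc, hPX]; rfl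
    rw [hcolX1] at h2; exact h2.trans hcolX1
  have hPsym : (Pm X₁ X₂)ᵀ = Pm X₁ X₂ := projM_transpose _
  have hP1sym : (projM X₁)ᵀ = projM X₁ := projM_transpose _
  have hM1sym : (M1 X₁)ᵀ = M1 X₁ := annM_transpose _
  have hPP1 : Pm X₁ X₂ * projM X₁ = projM X₁ := by
    simp only [projM, ← Matrix.mul_assoc, hPX1]
  have hP1P : projM X₁ * Pm X₁ X₂ = projM X₁ := by
    have h := congrArg Matrix.transpose hPP1
    rwa [transpose_mul, hPsym, hP1sym] at h
  have hN1eq : N1 X₁ X₂ = Pm X₁ X₂ - projM X₁ := by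
    rw [N1, M1, annM, Matrix.sub_mul, Matrix.one_mul, hP1P]
  have hPidem : Pm X₁ X₂ * Pm X₁ X₂ = Pm X₁ X₂ := projM_idem _ hUX
  have hP1idem : projM X₁ * projM X₁ = projM X₁ := projM_idem _ hU1
  have hNsym : (N1 X₁ X₂)ᵀ = N1 X₁ X₂ := by rw [hN1eq, transpose_sub, hPsym, hP1sym]
  have hNidem : N1 X₁ X₂ * N1 X₁ X₂ = N1 X₁ X₂ := by
    rw [hN1eq, Matrix.sub_mul, Matrix.mul_sub, Matrix.mul_sub, hPidem, hP1idem, hPP1, hP1P]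
    abel
  have hM1idem : M1 X₁ * M1 X₁ = M1 X₁ := by
    rw [M1, annM, Matrix.sub_mul, Matrix.mul_sub, Matrix.mul_sub, Matrix.one_mul,
      Matrix.mul_one, Matrix.one_mul, hP1idem]
    abel
  have hNX1 : N1 X₁ X₂ * X₁ = 0 := by rw [hN1eq, Matrix.sub_mul, hPX1, hP1X1, sub_self]
  have hNP1 : N1 X₁ X₂ * projM X₁ = 0 := by
    rw [hN1eq, Matrix.sub_mul, hPP1, hP1idem, sub_self]
  have hNM1 : N1 X₁ X₂ * M1 X₁ = N1 X₁ X₂ := by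
    rw [M1, annM, Matrix.mul_sub, Matrix.mul_one, hNP1, sub_zero]
  -- Gram matrices
  have hGramM : (M1 X₁ * Y)ᵀ * (M1 X₁ * Y) = Yᵀ * M1 X₁ * Y := by
    rw [transpose_mul, hM1sym, Matrix.mul_assoc Yᵀ, ← Matrix.mul_assoc (M1 X₁), hM1idem,
      ← Matrix.mul_assoc]
  have hGramN : (N1 X₁ X₂ * Y)ᵀ * (N1 X₁ X₂ * Y) = Yᵀ * N1 X₁ X₂ * Y := by
    rw [transpose_mul, hNsym, Matrix.mul_assoc Yᵀ, ← Matrix.mul_assoc (N1 X₁ X₂), hNidem,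
      ← Matrix.mul_assoc]
  have hM1Yinj : Function.Injective (M1 X₁ * Y).mulVec := by
    apply mulVec_inj_of_ker
    intro u hu
    have hu' : (1 - projM X₁) *ᵥ (Y *ᵥ u) = 0 := by
      rw [Matrix.mulVec_mulVec]; exact hu
    rw [Matrix.sub_mulVec, Matrix.one_mulVec] at hu'
    have hYu : Y *ᵥ u = projM X₁ *ᵥ (Y *ᵥ u) := sub_eq_zero.mp hu'
    have hX1d : X₁ *ᵥ (((X₁ᵀ * X₁)⁻¹ * X₁ᵀ) *ᵥ (Y *ᵥ u)) = Y *ᵥ u := by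
      rw [Matrix.mulVec_mulVec, ← Matrix.mul_assoc]
      exact hYu.symm
    have hZ : Zfull Y X₁ X₂ *ᵥ
        (Sum.elim u (Sum.elim (-(((X₁ᵀ * X₁)⁻¹ * X₁ᵀ) *ᵥ (Y *ᵥ u))) 0)) = 0 := by
      rw [Zfull, fromCols_mulVec_sumElim, fromCols_mulVec_sumElim, Matrix.mulVec_zero,
        add_zero, Matrix.mulVec_neg, hX1d]
      abel
    have h0 := ker_of_mulVec_inj _ hZinj hZ
    funext i
    exact congrFun h0 (Sum.inl i)
  have hUMY : IsUnit (Yᵀ * M1 X₁ * Y).det := by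
    rw [← hGramM]; exact isUnit_gram_det _ hM1Yinj
  have hN1Yinj : Function.Injective (N1 X₁ X₂ * Y).mulVec := by
    apply mulVec_inj_of_ker
    intro u hu
    have hu' : (1 - projM X₁) *ᵥ (Pm X₁ X₂ *ᵥ (Y *ᵥ u)) = 0 := by
      rw [Matrix.mulVec_mulVec, Matrix.mulVec_mulVec]
      exact hu
    rw [Matrix.sub_mulVec, Matrix.one_mulVec] at hu'
    have hYu : Pm X₁ X₂ *ᵥ (Y *ᵥ u) = projM X₁ *ᵥ (Pm X₁ X₂ *ᵥ (Y *ᵥ u)) :=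
      sub_eq_zero.mp hu'
    have hX1d : X₁ *ᵥ (((X₁ᵀ * X₁)⁻¹ * X₁ᵀ) *ᵥ (Pm X₁ X₂ *ᵥ (Y *ᵥ u)))
        = Pm X₁ X₂ *ᵥ (Y *ᵥ u) := by
      rw [Matrix.mulVec_mulVec, ← Matrix.mul_assoc]
      exact hYu.symm
    have hZ : fromCols (Pm X₁ X₂ * Y) X₁ *ᵥ
        (Sum.elim u (-(((X₁ᵀ * X₁)⁻¹ * X₁ᵀ) *ᵥ (Pm X₁ X₂ *ᵥ (Y *ᵥ u))))) = 0 := by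
      rw [fromCols_mulVec_sumElim, Matrix.mulVec_neg, hX1d, ← Matrix.mulVec_mulVec]
      abel
    have h0 := ker_of_mulVec_inj _ hQinj hZ
    funext i
    exact congrFun h0 (Sum.inl i)
  have hUNY : IsUnit (Yᵀ * N1 X₁ X₂ * Y).det := by
    rw [← hGramN]; exact isUnit_gram_det _ hN1Yinj
  have hYbarinj : Function.Injective (Ybar Y X₁).mulVec := by
    apply mulVec_inj_of_ker
    intro u hu
    have hu2 : Y *ᵥ (u ∘ Sum.inl) + X₁ *ᵥ (u ∘ Sum.inr) = 0 := by
      rw [Ybar] at hu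
      rw [← fromCols_mulVec_sumElim, Sum.elim_comp_inl_inr]
      exact hu
    have hz : Zfull Y X₁ X₂ *ᵥ Sum.elim (u ∘ Sum.inl) (Sum.elim (u ∘ Sum.inr) 0) = 0 := by
      rw [Zfull, fromCols_mulVec_sumElim, fromCols_mulVec_sumElim, Matrix.mulVec_zero,
        add_zero]
      exact hu2
    have h0 := ker_of_mulVec_inj _ hZinj hz
    funext x
    cases x with
    | inl i => exact congrFun h0 (Sum.inl i)
    | inr j => exact congrFun h0 (Sum.inr (Sum.inl j))
  have hUYbar : IsUnit ((Ybar Y X₁)ᵀ * Ybar Y X₁).det := isUnit_gram_det _ hYbarinj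
  -- annihilators kill columns
  have hAnnYbar : annM (Ybar Y X₁) * Ybar Y X₁ = 0 := annM_mul_self _ hUYbar
  have hAnnZ : annM (Zfull Y X₁ X₂) * Zfull Y X₁ X₂ = 0 := annM_mul_self _ hUZ
  have hYbarY : Ybar Y X₁ * fromRows (1 : Matrix (Fin G) (Fin G) ℝ)
      (0 : Matrix (Fin k₁) (Fin G) ℝ) = Y := by
    rw [Ybar, fromCols_mul_fromRows, Matrix.mul_one, Matrix.mul_zero, add_zero]
  have hYbarX1 : Ybar Y X₁ * fromRows (0 : Matrix (Fin G) (Fin k₁) ℝ)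
      (1 : Matrix (Fin k₁) (Fin k₁) ℝ) = X₁ := by
    rw [Ybar, fromCols_mul_fromRows, Matrix.mul_one, Matrix.mul_zero, zero_add]
  have hZY : Zfull Y X₁ X₂ * fromRows (1 : Matrix (Fin G) (Fin G) ℝ)
      (0 : Matrix (Fin k₁ ⊕ Fin k₂) (Fin G) ℝ) = Y := by
    rw [Zfull, fromCols_mul_fromRows, Matrix.mul_one, Matrix.mul_zero, add_zero]
  have hZX1 : Zfull Y X₁ X₂ * fromRows (0 : Matrix (Fin G) (Fin k₁) ℝ)
      (fromRows (1 : Matrix (Fin k₁) (Fin k₁) ℝ) (0 : Matrix (Fin k₂) (Fin k₁) ℝ)) = X₁ := by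
    rw [Zfull, fromCols_mul_fromRows, Matrix.mul_zero, zero_add, hcolX1]
  have hAnnYbarY : annM (Ybar Y X₁) * Y = 0 := by
    have h2 : annM (Ybar Y X₁) * (Ybar Y X₁ * fromRows (1 : Matrix (Fin G) (Fin G) ℝ) (0 : Matrix (Fin k₁) (Fin G) ℝ)) = 0 := by
      rw [← Matrix.mul_assoc, hAnnYbar, Matrix.zero_mul]
    rwa [hYbarY] at h2
  have hAnnYbarX1 : annM (Ybar Y X₁) * X₁ = 0 := by
    have h2 : annM (Ybar Y X₁) * (Ybar Y X₁ * fromRows (0 : Matrix (Fin G) (Fin k₁) ℝ) (1 : Matrix (Fin k₁) (Fin k₁) ℝ)) = 0 := by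
      rw [← Matrix.mul_assoc, hAnnYbar, Matrix.zero_mul]
    rwa [hYbarX1] at h2
  have hAnnZY : annM (Zfull Y X₁ X₂) * Y = 0 := by
    have h2 : annM (Zfull Y X₁ X₂) * (Zfull Y X₁ X₂ * fromRows (1 : Matrix (Fin G) (Fin G) ℝ) (0 : Matrix (Fin k₁ ⊕ Fin k₂) (Fin G) ℝ)) = 0 := by
      rw [← Matrix.mul_assoc, hAnnZ, Matrix.zero_mul]
    rwa [hZY] at h2
  have hAnnZX1 : annM (Zfull Y X₁ X₂) * X₁ = 0 := by
    have h2 : annM (Zfull Y X₁ X₂) * (Zfull Y X₁ X₂ * fromRows (0 : Matrix (Fin G) (Fin k₁) ℝ) (fromRows (1 : Matrix (Fin k₁) (Fin k₁) ℝ) (0 : Matrix (Fin k₂) (Fin k₁) ℝ))) = 0 := by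
      rw [← Matrix.mul_assoc, hAnnZ, Matrix.zero_mul]
    rwa [hZX1] at h2
  -- B and C identities
  have hB1Y : B1 Y X₁ * Y = 1 := by
    rw [B1, Matrix.mul_assoc]
    exact Matrix.nonsing_inv_mul _ hUMY
  have hB2Y : B2 Y X₁ X₂ * Y = 1 := by
    rw [B2, Matrix.mul_assoc]
    exact Matrix.nonsing_inv_mul _ hUNY
  have hB1X1 : B1 Y X₁ * X₁ = 0 := by
    rw [B1, Matrix.mul_assoc, Matrix.mul_assoc Yᵀ (M1 X₁) X₁, hM1X1, Matrix.mul_zero,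
      Matrix.mul_zero]
  have hB2X1 : B2 Y X₁ X₂ * X₁ = 0 := by
    rw [B2, Matrix.mul_assoc, Matrix.mul_assoc Yᵀ (N1 X₁ X₂) X₁, hNX1, Matrix.mul_zero,
      Matrix.mul_zero]
  have hC1Y : C1 Y X₁ X₂ * Y = 0 := by
    rw [C1, Matrix.sub_mul, hB2Y, hB1Y, sub_self]
  have hC1X1 : C1 Y X₁ X₂ * X₁ = 0 := by
    rw [C1, Matrix.sub_mul, hB2X1, hB1X1, sub_self]
  have hB1M1Y : B1 Y X₁ * (M1 X₁ * Y) = 1 := by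
    rw [B1, Matrix.mul_assoc, Matrix.mul_assoc Yᵀ (M1 X₁) (M1 X₁ * Y),
      ← Matrix.mul_assoc (M1 X₁) (M1 X₁) Y, hM1idem, ← Matrix.mul_assoc Yᵀ (M1 X₁) Y]
    exact Matrix.nonsing_inv_mul _ hUMY
  have hB2M1Y : B2 Y X₁ X₂ * (M1 X₁ * Y) = 1 := by
    rw [B2, Matrix.mul_assoc, Matrix.mul_assoc Yᵀ (N1 X₁ X₂) (M1 X₁ * Y),
      ← Matrix.mul_assoc (N1 X₁ X₂) (M1 X₁) Y, hNM1, ← Matrix.mul_assoc Yᵀ (N1 X₁ X₂) Y]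
    exact Matrix.nonsing_inv_mul _ hUNY
  have hC1M1Y : C1 Y X₁ X₂ * (M1 X₁ * Y) = 0 := by
    rw [C1, Matrix.sub_mul, hB2M1Y, hB1M1Y, sub_self]
  -- Psi0 facts
  have hPsiY : Psi0 Y X₁ X₂ * Y = 0 := by
    simp only [Psi0, Matrix.mul_assoc]
    rw [hC1Y, Matrix.mul_zero, Matrix.mul_zero]
  have hPsiX1 : Psi0 Y X₁ X₂ * X₁ = 0 := by
    simp only [Psi0, Matrix.mul_assoc]
    rw [hC1X1, Matrix.mul_zero, Matrix.mul_zero]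
  have hPsiM1Y : Psi0 Y X₁ X₂ * (M1 X₁ * Y) = 0 := by
    simp only [Psi0, Matrix.mul_assoc]
    rw [hC1M1Y, Matrix.mul_zero, Matrix.mul_zero]
  have hPsiT : (Psi0 Y X₁ X₂)ᵀ
      = (C1 Y X₁ X₂)ᵀ * ((Dhat Y X₁ X₂)⁻¹)ᵀ * C1 Y X₁ X₂ := by
    rw [Psi0, transpose_mul, transpose_mul, transpose_transpose, ← Matrix.mul_assoc]
  have hPsiTY : (Psi0 Y X₁ X₂)ᵀ * Y = 0 := by
    rw [hPsiT]
    simp only [Matrix.mul_assoc]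
    rw [hC1Y, Matrix.mul_zero, Matrix.mul_zero]
  have hPsiTX1 : (Psi0 Y X₁ X₂)ᵀ * X₁ = 0 := by
    rw [hPsiT]
    simp only [Matrix.mul_assoc]
    rw [hC1X1, Matrix.mul_zero, Matrix.mul_zero]
  have hPsiTM1Y : (Psi0 Y X₁ X₂)ᵀ * (M1 X₁ * Y) = 0 := by
    rw [hPsiT]
    simp only [Matrix.mul_assoc]
    rw [hC1M1Y, Matrix.mul_zero, Matrix.mul_zero]
  -- Lambda1 facts
  have hAnnNY : annM (N1 X₁ X₂ * Y) * (N1 X₁ X₂ * Y) = 0 :=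
    annM_mul_self _ (by rw [hGramN]; exact hUNY)
  have hAnnMY : annM (M1 X₁ * Y) * (M1 X₁ * Y) = 0 :=
    annM_mul_self _ (by rw [hGramM]; exact hUMY)
  have hL1Y : Lam1 Y X₁ X₂ * Y = 0 := by
    rw [Lam1, Matrix.smul_mul]
    simp only [Matrix.mul_assoc]
    rw [hAnnNY, Matrix.mul_zero, smul_zero]
  have hL1X1 : Lam1 Y X₁ X₂ * X₁ = 0 := by
    rw [Lam1, Matrix.smul_mul]
    simp only [Matrix.mul_assoc]
    rw [hNX1, Matrix.mul_zero, Matrix.mul_zero, smul_zero]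
  have hL1sym : (Lam1 Y X₁ X₂)ᵀ = Lam1 Y X₁ X₂ := by
    rw [Lam1, transpose_smul]
    simp only [transpose_mul, annM_transpose, hNsym, Matrix.mul_assoc]
  -- Lambda4 facts
  have hL4Y : Lam4 Y X₁ * Y = 0 := by
    rw [Lam4, Matrix.smul_mul]
    simp only [Matrix.mul_assoc]
    rw [hAnnMY, Matrix.mul_zero, smul_zero]
  have hL4X1 : Lam4 Y X₁ * X₁ = 0 := by
    rw [Lam4, Matrix.smul_mul]
    simp only [Matrix.mul_assoc]
    rw [hM1X1, Matrix.mul_zero, Matrix.mul_zero, smul_zero]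
  have hL4sym : (Lam4 Y X₁)ᵀ = Lam4 Y X₁ := by
    rw [Lam4, transpose_smul]
    simp only [transpose_mul, annM_transpose, hM1sym, Matrix.mul_assoc]
  -- Lambda3 facts
  have hN2M1Y : N2 Y X₁ X₂ * (M1 X₁ * Y) = 0 := by
    rw [N2, Matrix.sub_mul, Matrix.one_mul,
      Matrix.mul_assoc (M1 X₁ * Y) (B2 Y X₁ X₂) (M1 X₁ * Y), hB2M1Y, Matrix.mul_one,
      sub_self]
  have hL3Y : Lam3 Y X₁ X₂ * Y = 0 := by
    rw [Lam3, Matrix.smul_mul]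
    simp only [Matrix.mul_assoc]
    rw [hN2M1Y, Matrix.mul_zero, Matrix.mul_zero, smul_zero]
  have hL3X1 : Lam3 Y X₁ X₂ * X₁ = 0 := by
    rw [Lam3, Matrix.smul_mul]
    simp only [Matrix.mul_assoc]
    rw [hM1X1, Matrix.mul_zero, Matrix.mul_zero, Matrix.mul_zero, smul_zero]
  have hL3sym : (Lam3 Y X₁ X₂)ᵀ = Lam3 Y X₁ X₂ := by
    rw [Lam3, transpose_smul]
    simp only [transpose_mul, transpose_transpose, hM1sym, Matrix.mul_assoc]
  -- Lambda2 facts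
  have hL2Y : Lam2 Y X₁ X₂ * Y = 0 := by
    rw [Lam2]
    simp only [Matrix.mul_assoc]
    rw [Matrix.sub_mul, Matrix.smul_mul, hAnnMY, hPsiM1Y, smul_zero, sub_self,
      Matrix.mul_zero]
  have hL2X1 : Lam2 Y X₁ X₂ * X₁ = 0 := by
    rw [Lam2]
    simp only [Matrix.mul_assoc]
    rw [hM1X1, Matrix.mul_zero, Matrix.mul_zero]
  have hL2T : (Lam2 Y X₁ X₂)ᵀ
      = M1 X₁ * ((T : ℝ)⁻¹ • annM (M1 X₁ * Y) - (Psi0 Y X₁ X₂)ᵀ) * M1 X₁ := by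
    rw [Lam2]
    simp only [transpose_mul, transpose_sub, transpose_smul, annM_transpose, hM1sym,
      Matrix.mul_assoc]
  have hL2TY : (Lam2 Y X₁ X₂)ᵀ * Y = 0 := by
    rw [hL2T]
    simp only [Matrix.mul_assoc]
    rw [Matrix.sub_mul, Matrix.smul_mul, hAnnMY, hPsiTM1Y, smul_zero, sub_self,
      Matrix.mul_zero]
  have hL2TX1 : (Lam2 Y X₁ X₂)ᵀ * X₁ = 0 := by
    rw [hL2T]
    simp only [Matrix.mul_assoc]
    rw [hM1X1, Matrix.mul_zero, Matrix.mul_zero]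
  -- PsiR, LamR facts
  have hPRY : PsiR Y X₁ X₂ * Y = 0 := by
    rw [PsiR, Matrix.smul_mul, Matrix.sub_mul, hAnnYbarY, hAnnZY, sub_self, smul_zero]
  have hPRX1 : PsiR Y X₁ X₂ * X₁ = 0 := by
    rw [PsiR, Matrix.smul_mul, Matrix.sub_mul, hAnnYbarX1, hAnnZX1, sub_self, smul_zero]
  have hPRsym : (PsiR Y X₁ X₂)ᵀ = PsiR Y X₁ X₂ := by
    rw [PsiR, transpose_smul, transpose_sub, annM_transpose, annM_transpose]
  have hLRY : LamR Y X₁ X₂ * Y = 0 := by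
    rw [LamR, Matrix.smul_mul, hAnnZY, smul_zero]
  have hLRX1 : LamR Y X₁ X₂ * X₁ = 0 := by
    rw [LamR, Matrix.smul_mul, hAnnZX1, smul_zero]
  have hLRsym : (LamR Y X₁ X₂)ᵀ = LamR Y X₁ X₂ := by
    rw [LamR, transpose_smul, annM_transpose]
  -- vector versions
  have hv0 : ∀ A : Matrix (Fin T) (Fin T) ℝ, A * Y = 0 → A * X₁ = 0 →
      A *ᵥ (Y *ᵥ β + X₁ *ᵥ γ) = 0 := by
    intro A h1 h2
    rw [Matrix.mulVec_add, Matrix.mulVec_mulVec, Matrix.mulVec_mulVec, h1, h2,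
      Matrix.zero_mulVec, Matrix.zero_mulVec, add_zero]
  have hσ2 : (σ : ℝ) ^ 2 ≠ 0 := pow_ne_zero 2 hσ
  have hquad : ∀ A : Matrix (Fin T) (Fin T) ℝ,
      A *ᵥ (Y *ᵥ β + X₁ *ᵥ γ) = 0 → Aᵀ *ᵥ (Y *ᵥ β + X₁ *ᵥ γ) = 0 →
      y ⬝ᵥ (A *ᵥ y) = σ ^ 2 * (ε ⬝ᵥ (A *ᵥ ε)) := by
    intro A h1 h2
    have hve : (Y *ᵥ β + X₁ *ᵥ γ) ⬝ᵥ (A *ᵥ ε) = 0 := by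
      rw [Matrix.dotProduct_mulVec, ← Matrix.mulVec_transpose, h2, zero_dotProduct]
    rw [hy]
    simp only [Matrix.mulVec_add, h1, zero_add, Matrix.mulVec_smul, add_dotProduct,
      dotProduct_smul, smul_dotProduct, hve, smul_eq_mul, smul_zero, mul_zero, zero_add]
    ring
  -- the first conclusion
  have hC1v : C1 Y X₁ X₂ *ᵥ (Y *ᵥ β + X₁ *ᵥ γ) = 0 := by
    rw [Matrix.mulVec_add, Matrix.mulVec_mulVec, Matrix.mulVec_mulVec, hC1Y, hC1X1,
      Matrix.zero_mulVec, Matrix.zero_mulVec, add_zero]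
  have hC1y : C1 Y X₁ X₂ *ᵥ y = σ • (C1 Y X₁ X₂ *ᵥ ε) := by
    rw [hy, Matrix.mulVec_add, hC1v, zero_add, Matrix.mulVec_smul]
  have hqPsi : y ⬝ᵥ (Psi0 Y X₁ X₂ *ᵥ y) = σ ^ 2 * (ε ⬝ᵥ (Psi0 Y X₁ X₂ *ᵥ ε)) :=
    hquad _ (hv0 _ hPsiY hPsiX1) (hv0 _ hPsiTY hPsiTX1)
  have hqL1 : y ⬝ᵥ (Lam1 Y X₁ X₂ *ᵥ y) = σ ^ 2 * (ε ⬝ᵥ (Lam1 Y X₁ X₂ *ᵥ ε)) :=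
    hquad _ (hv0 _ hL1Y hL1X1) (hv0 _ (by rw [hL1sym]; exact hL1Y) (by rw [hL1sym]; exact hL1X1))
  have hqL2 : y ⬝ᵥ (Lam2 Y X₁ X₂ *ᵥ y) = σ ^ 2 * (ε ⬝ᵥ (Lam2 Y X₁ X₂ *ᵥ ε)) :=
    hquad _ (hv0 _ hL2Y hL2X1) (hv0 _ hL2TY hL2TX1)
  have hqL3 : y ⬝ᵥ (Lam3 Y X₁ X₂ *ᵥ y) = σ ^ 2 * (ε ⬝ᵥ (Lam3 Y X₁ X₂ *ᵥ ε)) :=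
    hquad _ (hv0 _ hL3Y hL3X1) (hv0 _ (by rw [hL3sym]; exact hL3Y) (by rw [hL3sym]; exact hL3X1))
  have hqL4 : y ⬝ᵥ (Lam4 Y X₁ *ᵥ y) = σ ^ 2 * (ε ⬝ᵥ (Lam4 Y X₁ *ᵥ ε)) :=
    hquad _ (hv0 _ hL4Y hL4X1) (hv0 _ (by rw [hL4sym]; exact hL4Y) (by rw [hL4sym]; exact hL4X1))
  have hqPR : y ⬝ᵥ (PsiR Y X₁ X₂ *ᵥ y) = σ ^ 2 * (ε ⬝ᵥ (PsiR Y X₁ X₂ *ᵥ ε)) :=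
    hquad _ (hv0 _ hPRY hPRX1) (hv0 _ (by rw [hPRsym]; exact hPRY) (by rw [hPRsym]; exact hPRX1))
  have hqLR : y ⬝ᵥ (LamR Y X₁ X₂ *ᵥ y) = σ ^ 2 * (ε ⬝ᵥ (LamR Y X₁ X₂ *ᵥ ε)) :=
    hquad _ (hv0 _ hLRY hLRX1) (hv0 _ (by rw [hLRsym]; exact hLRY) (by rw [hLRsym]; exact hLRX1))
  refine ⟨hC1y, hqPsi, hqL1, hqL2, hqL3, hqL4, hqPR, hqLR, ?_, ?_, ?_, ?_, ?_, ?_⟩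
  · intro _
    rw [hqPsi, hqL1, mul_div_mul_left _ _ hσ2]
  · intro _
    rw [hqPsi, hqL2, mul_div_mul_left _ _ hσ2]
  · intro _
    rw [hqPsi, hqL3, mul_div_mul_left _ _ hσ2]
  · intro _
    rw [hqPsi, hqL4, mul_div_mul_left _ _ hσ2]
  · intro _
    rw [hqPR, hqLR, mul_div_mul_left _ _ hσ2]
  · -- final Hausman-type statement
    rw [hC1y, hqL3, hqL4, mul_smul, mul_smul, ← smul_sub,
      real_smul_inv _ hσ2]
    simp only [Matrix.smul_mulVec, Matrix.mulVec_smul, smul_dotProduct,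
      dotProduct_smul, smul_eq_mul]
    field_simp
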